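/- The graph 2M_5, the disjoint union of two copies of the maximal outerplanar graph on 5 vertices, is an outerplanar graph on 10 vertices with 14 edges containing no subgraph isomorphic to S_{2,2}; hence ex_OP(10, S_{2,2}) ≥ 14 > ⌊3·9/2⌋ = 13. -/

import Mathlib

open SimpleGraph Finset

/-- `G` contains a copy of the double star `S_{p,q}`: adjacent centers `x, y`,
with `p` leaves attached to `x` and `q` leaves attached to `y`, all distinct. -/
def ContainsDoubleStar {V : Type*} (G : SimpleGraph V) (p q : ℕ) : Prop :=
  ∃ (x y : V) (X Y : Finset V), G.Adj x y ∧ X.card = p ∧ Y.card = q ∧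
    Disjoint X Y ∧ y ∉ X ∧ x ∉ Y ∧ (∀ v ∈ X, G.Adj x v) ∧ (∀ v ∈ Y, G.Adj y v)

/-- A graph is outerplanar iff it admits a one-page book embedding: a linear
ordering of the vertices such that no two edges cross. -/
def IsOuterplanar {V : Type*} (G : SimpleGraph V) : Prop :=
  ∃ σ : V → Fin (Nat.card V), Function.Bijective σ ∧
    ∀ a b c d : V, G.Adj a b → G.Adj c d → ¬ (σ a < σ c ∧ σ c < σ b ∧ σ b < σ d)

/-- `M_5`: the unique maximal outerplanar graph on 5 vertices, a 5-cycle
`0 1 2 3 4` with the two chords `0-2` and `2-4`. -/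
def M5 : SimpleGraph (Fin 5) :=
  SimpleGraph.fromEdgeSet {s(0, 1), s(1, 2), s(2, 3), s(3, 4), s(4, 0), s(0, 2), s(2, 4)}

/-- `2M_5`: the disjoint union of two copies of `M_5`. -/
def twoM5 : SimpleGraph (Fin 5 ⊕ Fin 5) := M5 ⊕g M5

instance : DecidableRel M5.Adj := fun a b =>
  decidable_of_iff (a ≠ b ∧ (s(a,b) = s(0,1) ∨ s(a,b) = s(1,2) ∨ s(a,b) = s(2,3) ∨ s(a,b) = s(3,4)
    ∨ s(a,b) = s(4,0) ∨ s(a,b) = s(0,2) ∨ s(a,b) = s(2,4))) (by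
    rw [M5, fromEdgeSet_adj]
    simp [Set.mem_insert_iff, and_comm])

instance : DecidableRel twoM5.Adj := fun a b =>
  match a, b with
  | .inl a, .inl b => (inferInstance : Decidable (M5.Adj a b))
  | .inr a, .inr b => (inferInstance : Decidable (M5.Adj a b))
  | .inl _, .inr _ => .isFalse (by simp [twoM5])
  | .inr _, .inl _ => .isFalse (by simp [twoM5])

lemma hcard10 : Nat.card (Fin 5 ⊕ Fin 5) = 10 := by simp [Nat.card_eq_fintype_card]

lemma adj_side {a b : Fin 5 ⊕ Fin 5} (h : twoM5.Adj a b) : a.isLeft = b.isLeft := by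
  cases a <;> cases b <;> simp_all [twoM5]

/-- Generic counting lemma: if adjacency preserves a Bool coloring and each color
class has at most 5 vertices, there is no `S_{2,2}`. -/
lemma no_ds {V : Type*} [Fintype V] [DecidableEq V] (G : SimpleGraph V) (f : V → Bool)
    (hf : ∀ a b, G.Adj a b → f a = f b)
    (h5 : ∀ c, (univ.filter (fun v => f v = c)).card ≤ 5) :
    ¬ ContainsDoubleStar G 2 2 := by
  rintro ⟨x, y, X, Y, hxy, hX, hY, hdisj, hyX, hxY, hXadj, hYadj⟩
  have hxX : x ∉ X := fun h => G.loopless.irrefl x (hXadj x h)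
  have hyY : y ∉ Y := fun h => G.loopless.irrefl y (hYadj y h)
  have hxney : x ≠ y := G.ne_of_adj hxy
  set S := insert x (insert y (X ∪ Y)) with hS
  have hyXY : y ∉ X ∪ Y := by simp [hyX, hyY]
  have hxI : x ∉ insert y (X ∪ Y) := by simp [hxney, hxX, hxY]
  have hcard : S.card = 6 := by
    rw [hS, card_insert_of_notMem hxI, card_insert_of_notMem hyXY,
      card_union_of_disjoint hdisj, hX, hY]
  have hsub : S ⊆ univ.filter (fun v => f v = f x) := by
    intro v hv
    simp only [hS, mem_insert, mem_union] at hv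
    simp only [mem_filter, mem_univ, true_and]
    rcases hv with rfl | rfl | hv | hv
    · rfl
    · exact (hf x v hxy).symm
    · exact (hf x v (hXadj v hv)).symm
    · exact ((hf x y hxy).trans (hf y v (hYadj v hv))).symm
  have := (hcard ▸ card_le_card hsub).trans (h5 (f x))
  omega

lemma cross : ∀ a b c d : Fin 5 ⊕ Fin 5, twoM5.Adj a b → twoM5.Adj c d →
    ¬ (finSumFinEquiv a < finSumFinEquiv c ∧ finSumFinEquiv c < finSumFinEquiv b ∧
       finSumFinEquiv b < finSumFinEquiv d) := by decide

def G10 : SimpleGraph (Fin 10) := twoM5.comap ((@finSumFinEquiv 5 5).symm : Fin 10 → Fin 5 ⊕ Fin 5)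

instance : DecidableRel G10.Adj := fun a b =>
  (inferInstance : Decidable (twoM5.Adj ((@finSumFinEquiv 5 5).symm a) ((@finSumFinEquiv 5 5).symm b)))

theorem stmt11 :
    IsOuterplanar twoM5 ∧ Nat.card (Fin 5 ⊕ Fin 5) = 10 ∧
      Nat.card twoM5.edgeSet = 14 ∧ ¬ ContainsDoubleStar twoM5 2 2 ∧
      (∃ G : SimpleGraph (Fin 10), IsOuterplanar G ∧ ¬ ContainsDoubleStar G 2 2 ∧
        14 ≤ Nat.card G.edgeSet) ∧ 3 * (10 - 1) / 2 < 14 := by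
  refine ⟨⟨(finCongr hcard10.symm) ∘ finSumFinEquiv,
      (finCongr hcard10.symm).bijective.comp finSumFinEquiv.bijective, cross⟩,
    hcard10, by rw [Nat.card_eq_fintype_card]; decide,
    no_ds twoM5 Sum.isLeft (fun a b h => adj_side h) (by decide),
    ⟨G10, ?_, ?_, ?_⟩, by norm_num⟩
  · have hc : (10 : ℕ) = Nat.card (Fin 10) := by simp [Nat.card_eq_fintype_card]
    refine ⟨finCongr hc, (finCongr hc).bijective, ?_⟩
    intro a b c d hab hcd
    have := cross _ _ _ _ hab hcd
    simpa using this
  · exact no_ds G10 (fun v => (finSumFinEquiv.symm v).isLeft)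
      (fun a b h => adj_side (show twoM5.Adj ((@finSumFinEquiv 5 5).symm a) ((@finSumFinEquiv 5 5).symm b) from h)) (by decide)
  · rw [Nat.card_eq_fintype_card]; decide
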